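/- arXiv:1006.5137 — 5 statements merged into one kernel-verified Lean document; each statement's English description precedes it below -/
import Mathlib

section
/- Let K = {x ∈ ℝⁿ : gⱼ(x) ≥ 0, j = 1,…,m} be convex and compact with each gⱼ continuously differentiable, Slater's condition holding, and the nondegeneracy condition: ∇gⱼ(x) ≠ 0 for every x ∈ K with gⱼ(x) = 0. Let f be convex and continuously differentiable. If (x_{μ_ℓ}) is a sequence of stationary points of the log-barrier φ_{μ_ℓ} (i.e., ∇f(x_{μ_ℓ}) = ∑ⱼ (μ_ℓ/gⱼ(x_{μ_ℓ})) ∇gⱼ(x_{μ_ℓ}) with all gⱼ(x_{μ_ℓ}) > 0) with μ_ℓ → 0 and x_{μ_ℓ} → x* ∈ K, then x* is a global minimizer of f on K. -/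
open Real Filter Set Topology RealInnerProductSpace

section helpers

variable {E : Type*} [NormedAddCommGroup E] [InnerProductSpace ℝ E] [CompleteSpace E]

lemma aux_inner_gradient_eq (f : E → ℝ) (a v : E) :
    ⟪gradient f a, v⟫ = fderiv ℝ f a v := by
  rw [gradient]
  exact InnerProductSpace.toDual_symm_apply

lemma aux_continuous_gradient {f : E → ℝ} (hf : ContDiff ℝ 1 f) :
    Continuous (gradient f) := by
  have h := hf.continuous_fderiv one_ne_zero
  exact (InnerProductSpace.toDual ℝ E).symm.continuous.comp h

lemma aux_slope_tendsto {f : E → ℝ} {a : E} (hf : DifferentiableAt ℝ f a) (v : E) :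
    Tendsto (fun t : ℝ => (f (a + t • v) - f a) / t) (𝓝[>] (0:ℝ))
      (𝓝 (fderiv ℝ f a v)) := by
  have hline : HasDerivAt (fun t : ℝ => a + t • v) v 0 := by
    simpa using ((hasDerivAt_id (0:ℝ)).smul_const v).const_add a
  have hfd : HasFDerivAt f (fderiv ℝ f a) ((fun t : ℝ => a + t • v) 0) := by
    simpa using hf.hasFDerivAt
  have h := hfd.comp_hasDerivAt 0 hline
  rw [hasDerivAt_iff_tendsto_slope] at h
  have h2 := h.mono_left (nhdsWithin_mono 0 (fun t ht => ne_of_gt ht))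
  refine h2.congr' ?_
  filter_upwards [self_mem_nhdsWithin] with t (ht : (0:ℝ) < t)
  simp [slope_def_field, Function.comp]

lemma aux_convex_fderiv_le {f : E → ℝ} (hconv : ConvexOn ℝ Set.univ f)
    {a : E} (hd : DifferentiableAt ℝ f a) (v : E) :
    fderiv ℝ f a v ≤ f (a + v) - f a := by
  refine le_of_tendsto (aux_slope_tendsto hd v) ?_
  filter_upwards [Ioc_mem_nhdsGT_of_mem (left_mem_Ico.2 one_pos)] with t ht
  have hcomb := hconv.2 (mem_univ a) (mem_univ (a + v))
    (by linarith [ht.2] : (0:ℝ) ≤ 1 - t) ht.1.le (by ring)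
  have heq : (1 - t) • a + t • (a + v) = a + t • v := by module
  rw [heq] at hcomb
  simp only [smul_eq_mul] at hcomb
  rw [div_le_iff₀ ht.1]
  nlinarith [hcomb]

end helpers

theorem barrier_stationary_limit_global_min (n m : ℕ)
    (g : Fin m → EuclideanSpace ℝ (Fin n) → ℝ)
    (f : EuclideanSpace ℝ (Fin n) → ℝ)
    (hg : ∀ j, ContDiff ℝ 1 (g j)) (hf : ContDiff ℝ 1 f)
    (hfconv : ConvexOn ℝ Set.univ f)
    (K : Set (EuclideanSpace ℝ (Fin n)))
    (hKdef : K = {x | ∀ j, 0 ≤ g j x})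
    (hKconv : Convex ℝ K) (hKcomp : IsCompact K)
    (slater : ∃ x₀, ∀ j, 0 < g j x₀)
    (nondeg : ∀ j, ∀ x ∈ K, g j x = 0 → gradient (g j) x ≠ 0)
    (μ : ℕ → ℝ) (hμpos : ∀ ℓ, 0 < μ ℓ)
    (hμ0 : Tendsto μ atTop (nhds 0))
    (x : ℕ → EuclideanSpace ℝ (Fin n))
    (hfeas : ∀ ℓ j, 0 < g j (x ℓ))
    (hstat : ∀ ℓ, gradient f (x ℓ) =
      ∑ j, (μ ℓ / g j (x ℓ)) • gradient (g j) (x ℓ))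
    (xs : EuclideanSpace ℝ (Fin n)) (hxs : xs ∈ K)
    (hlim : Tendsto x atTop (nhds xs)) :
    ∀ y ∈ K, f xs ≤ f y := by
  obtain ⟨x₀, hx₀⟩ := slater
  have hK' : ∀ p, p ∈ K ↔ ∀ j, 0 ≤ g j p := fun p => by rw [hKdef]; rfl
  -- a ball around the Slater point inside K
  have hUopen : IsOpen {p : EuclideanSpace ℝ (Fin n) | ∀ j, 0 < g j p} := by
    have : {p : EuclideanSpace ℝ (Fin n) | ∀ j, 0 < g j p}
        = ⋂ j, (g j) ⁻¹' Ioi 0 := by ext p; simp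
    rw [this]
    exact isOpen_iInter_of_finite fun j => isOpen_Ioi.preimage (hg j).continuous
  obtain ⟨ε, hε, hball⟩ := Metric.isOpen_iff.1 hUopen x₀ hx₀
  have hballK : Metric.ball x₀ ε ⊆ K := fun p hp => (hK' p).2 fun j => (hball hp j).le
  -- Core claim: if a ball around z lies in K, then f xs ≤ f z
  have core : ∀ z r, 0 < r → Metric.ball z r ⊆ K → f xs ≤ f z := by
    intro z r hr hb
    set L := ⟪gradient f xs, z - xs⟫ with hLdef
    have hLlim : Tendsto (fun ℓ => ⟪gradient f (x ℓ), z - x ℓ⟫) atTop (𝓝 L) := by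
      have h1 : Tendsto (fun ℓ => gradient f (x ℓ)) atTop (𝓝 (gradient f xs)) :=
        ((aux_continuous_gradient hf).continuousAt.tendsto).comp hlim
      have h2 : Tendsto (fun ℓ => z - x ℓ) atTop (𝓝 (z - xs)) :=
        tendsto_const_nhds.sub hlim
      exact h1.inner h2
    -- per-constraint eventual lower bound
    have hterm : ∀ (j : Fin m) (δ : ℝ), 0 < δ →
        ∀ᶠ ℓ in atTop, -δ ≤ (μ ℓ / g j (x ℓ)) * ⟪gradient (g j) (x ℓ), z - x ℓ⟫ := by
      intro j δ hδ
      have hip : Tendsto (fun ℓ => ⟪gradient (g j) (x ℓ), z - x ℓ⟫) atTop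
          (𝓝 ⟪gradient (g j) xs, z - xs⟫) := by
        have h1 : Tendsto (fun ℓ => gradient (g j) (x ℓ)) atTop (𝓝 (gradient (g j) xs)) :=
          ((aux_continuous_gradient (hg j)).continuousAt.tendsto).comp hlim
        exact h1.inner (tendsto_const_nhds.sub hlim)
      by_cases hact : g j xs = 0
      · -- active constraint
        set u := gradient (g j) xs with hu
        have hune : u ≠ 0 := nondeg j xs hxs hact
        have hfo : ∀ w ∈ K, 0 ≤ ⟪u, w - xs⟫ := by
          intro w hw
          rw [hu, aux_inner_gradient_eq]
          refine ge_of_tendsto (aux_slope_tendsto ((hg j).differentiable one_ne_zero xs) (w - xs)) ?_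
          filter_upwards [Ioc_mem_nhdsGT_of_mem (left_mem_Ico.2 one_pos)] with t ht
          have hmem : xs + t • (w - xs) ∈ K := by
            have hcomb := hKconv hxs hw
              (by linarith [ht.2] : (0:ℝ) ≤ 1 - t) ht.1.le (by ring)
            have heq : (1 - t) • xs + t • w = xs + t • (w - xs) := by module
            rwa [heq] at hcomb
          have hnn : 0 ≤ g j (xs + t • (w - xs)) := (hK' _).1 hmem j
          have hnum : 0 ≤ g j (xs + t • (w - xs)) - g j xs := by rw [hact]; simpa using hnn
          exact div_nonneg hnum ht.1.le
        have hwK : z - (r/2) • ‖u‖⁻¹ • u ∈ K := by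
          apply hb
          rw [Metric.mem_ball, dist_eq_norm]
          have : z - (r/2) • ‖u‖⁻¹ • u - z = -((r/2) • ‖u‖⁻¹ • u) := by abel
          rw [this, norm_neg, norm_smul, norm_smul, norm_inv, norm_norm,
            inv_mul_cancel₀ (norm_ne_zero_iff.2 hune), mul_one, Real.norm_eq_abs,
            abs_of_pos (by linarith : (0:ℝ) < r/2)]
          linarith
        have hc : 0 < ⟪u, z - xs⟫ := by
          have h0 := hfo _ hwK
          have hexp : ⟪u, z - (r/2) • ‖u‖⁻¹ • u - xs⟫
              = ⟪u, z - xs⟫ - (r/2) * ‖u‖⁻¹ * ⟪u, u⟫ := by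
            rw [show z - (r/2) • ‖u‖⁻¹ • u - xs = (z - xs) - ((r/2) * ‖u‖⁻¹) • u by
              rw [smul_smul]; abel]
            rw [inner_sub_right, real_inner_smul_right]
          rw [hexp, real_inner_self_eq_norm_sq] at h0
          have hupos : 0 < ‖u‖ := norm_pos_iff.2 hune
          have : (r/2) * ‖u‖⁻¹ * (‖u‖ * ‖u‖) = (r/2) * ‖u‖ := by
            field_simp
          nlinarith [h0, mul_pos (by linarith : (0:ℝ) < r/2) hupos]
        have hev := hip.eventually (eventually_gt_nhds hc : ∀ᶠ c in 𝓝 ⟪u, z - xs⟫, 0 < c)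
        filter_upwards [hev] with ℓ hℓ
        have hmul : 0 ≤ (μ ℓ / g j (x ℓ)) * ⟪gradient (g j) (x ℓ), z - x ℓ⟫ :=
          mul_nonneg (div_nonneg (hμpos ℓ).le (hfeas ℓ j).le) hℓ.le
        linarith
      · -- inactive constraint
        have hpos : 0 < g j xs := lt_of_le_of_ne ((hK' xs).1 hxs j) (Ne.symm hact)
        have hgl : Tendsto (fun ℓ => g j (x ℓ)) atTop (𝓝 (g j xs)) :=
          ((hg j).continuous.continuousAt.tendsto).comp hlim
        have hq : Tendsto (fun ℓ => (μ ℓ / g j (x ℓ)) * ⟪gradient (g j) (x ℓ), z - x ℓ⟫)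
            atTop (𝓝 ((0 / g j xs) * ⟪gradient (g j) xs, z - xs⟫)) :=
          (hμ0.div hgl hpos.ne').mul hip
        rw [zero_div, zero_mul] at hq
        have := hq.eventually (eventually_gt_nhds (by linarith : -δ < (0:ℝ)))
        filter_upwards [this] with ℓ hℓ using hℓ.le
    -- L ≥ 0
    have hL0 : 0 ≤ L := by
      by_contra hneg
      push_neg at hneg
      set δ := -L / (2 * (m + 1)) with hδdef
      have hδpos : 0 < δ := by
        apply div_pos (by linarith) (by positivity)
      have hev : ∀ᶠ ℓ in atTop, -((m:ℝ) * δ) ≤ ⟪gradient f (x ℓ), z - x ℓ⟫ := by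
        have hall := eventually_all.2 (fun j : Fin m => hterm j δ hδpos)
        filter_upwards [hall] with ℓ hℓ
        rw [hstat ℓ, sum_inner]
        have : ∀ j : Fin m, -δ ≤ ⟪(μ ℓ / g j (x ℓ)) • gradient (g j) (x ℓ), z - x ℓ⟫ := by
          intro j; rw [real_inner_smul_left]; exact hℓ j
        calc -((m:ℝ) * δ) = ∑ _j : Fin m, -δ := by
              rw [Finset.sum_const, Finset.card_univ, Fintype.card_fin, nsmul_eq_mul]
              ring
          _ ≤ _ := Finset.sum_le_sum fun j _ => this j
      have hLge : -((m:ℝ) * δ) ≤ L := ge_of_tendsto hLlim hev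
      have hmδ : (m:ℝ) * δ ≤ (m + 1) * δ := by nlinarith
      have : (m + 1 : ℝ) * δ = -L / 2 := by
        rw [hδdef]; field_simp
      linarith
    -- conclude via convexity
    have hcv := aux_convex_fderiv_le hfconv (hf.differentiable one_ne_zero xs) (z - xs)
    rw [show xs + (z - xs) = z by abel] at hcv
    rw [hLdef, aux_inner_gradient_eq] at hL0
    linarith
  -- approximate arbitrary y ∈ K from inside
  intro y hy
  have hle : ∀ t ∈ Ioc (0:ℝ) 1, f xs ≤ f (y + t • (x₀ - y)) := by
    intro t ht
    refine core _ (t * ε) (mul_pos ht.1 hε) ?_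
    intro w hw
    rw [Metric.mem_ball, dist_eq_norm] at hw
    have hmem : x₀ + t⁻¹ • (w - (y + t • (x₀ - y))) ∈ Metric.ball x₀ ε := by
      rw [Metric.mem_ball, dist_eq_norm]
      have : x₀ + t⁻¹ • (w - (y + t • (x₀ - y))) - x₀ = t⁻¹ • (w - (y + t • (x₀ - y))) := by abel
      rw [this, norm_smul, norm_inv, Real.norm_eq_abs, abs_of_pos ht.1]
      rw [inv_mul_lt_iff₀ ht.1]
      linarith
    have hcomb := hKconv hy (hballK hmem)
      (by linarith [ht.2] : (0:ℝ) ≤ 1 - t) ht.1.le (by ring)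
    have heq : (1 - t) • y + t • (x₀ + t⁻¹ • (w - (y + t • (x₀ - y)))) = w := by
      rw [smul_add, smul_smul, mul_inv_cancel₀ ht.1.ne', one_smul]
      module
    rwa [heq] at hcomb
  have hcont : Tendsto (fun t : ℝ => f (y + t • (x₀ - y))) (𝓝[>] 0) (𝓝 (f y)) := by
    have h1 : Tendsto (fun t : ℝ => y + t • (x₀ - y)) (𝓝 0) (𝓝 y) := by
      have hc : Continuous fun t : ℝ => y + t • (x₀ - y) :=
        continuous_const.add (continuous_id.smul continuous_const)
      simpa using hc.tendsto 0
    exact ((hf.continuous.tendsto y).comp h1).mono_left nhdsWithin_le_nhds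
  refine ge_of_tendsto hcont ?_
  filter_upwards [Ioc_mem_nhdsGT_of_mem (left_mem_Ico.2 one_pos)] with t ht
  exact hle t ht
end

section
/- Let K = {x ∈ ℝⁿ : gⱼ(x) ≥ 0, j = 1,…,m} be convex and compact with each gⱼ ∈ C¹, Slater's condition and nondegeneracy holding, and f convex C¹. If (x_{μ_ℓ}) are stationary points of the log-barrier with μ_ℓ → 0 converging to x* ∈ K, and ∇f(x*) ≠ 0, then x* is a KKT point: there exists λ ∈ ℝ^m with λ ≥ 0, λⱼ gⱼ(x*) = 0 for all j, and ∇f(x*) = ∑ⱼ λⱼ ∇gⱼ(x*). -/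
open Real Filter

section Aux
variable {E : Type*} [NormedAddCommGroup E] [InnerProductSpace ℝ E] [CompleteSpace E]

theorem aux_inner_gradient (h : E → ℝ) (x v : E) :
    (inner ℝ (gradient h x) v : ℝ) = fderiv ℝ h x v := by
  rw [gradient, InnerProductSpace.toDual_symm_apply]

theorem aux_grad_cont {h : E → ℝ} (hh : ContDiff ℝ 1 h) : Continuous (gradient h) := by
  have h1 : Continuous (fderiv ℝ h) := hh.continuous_fderiv one_ne_zero
  exact ((InnerProductSpace.toDual ℝ E).symm.continuous.comp h1 : _)

theorem aux_deriv_nonneg_of_seg {h : E → ℝ} (hh : ContDiff ℝ 1 h) {xs d : E}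
    (h0 : h xs = 0) (hseg : ∀ t : ℝ, t ∈ Set.Icc (0:ℝ) 1 → 0 ≤ h (xs + t • d)) :
    0 ≤ fderiv ℝ h xs d := by
  have hline : HasDerivAt (fun t : ℝ => xs + t • d) d 0 := by
    simpa using ((hasDerivAt_id (0:ℝ)).smul_const d).const_add xs
  have hd : HasDerivAt (fun t : ℝ => h (xs + t • d)) (fderiv ℝ h xs d) 0 := by
    have hD : HasFDerivAt h (fderiv ℝ h xs) (xs + (0:ℝ) • d) := by
      simpa using (hh.differentiable one_ne_zero xs).hasFDerivAt
    exact hD.comp_hasDerivAt (x := (0:ℝ)) hline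
  have hslope := hasDerivAt_iff_tendsto_slope.mp hd
  have hslope' : Tendsto (slope (fun t : ℝ => h (xs + t • d)) 0) (nhdsWithin 0 (Set.Ioi 0))
      (nhds (fderiv ℝ h xs d)) :=
    hslope.mono_left (nhdsWithin_mono _ (fun t ht => ne_of_gt ht))
  refine ge_of_tendsto hslope' ?_
  filter_upwards [Ioo_mem_nhdsGT_of_mem (Set.mem_Ico.mpr ⟨le_rfl, one_pos⟩)] with t ht
  rw [slope_def_field]
  have h1 : (0:ℝ) ≤ h (xs + t • d) := hseg t ⟨le_of_lt ht.1, le_of_lt ht.2⟩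
  have h0' : h (xs + (0:ℝ) • d) = 0 := by simpa using h0
  rw [h0', sub_zero, sub_zero]
  exact div_nonneg h1 ht.1.le

theorem aux_inner_pos_active {h : E → ℝ} (hh : ContDiff ℝ 1 h) {K : Set E}
    (hKconv : Convex ℝ K)
    (hKnn : ∀ y ∈ K, 0 ≤ h y) {xs x₀ : E} (hxs : xs ∈ K) (hx₀ : x₀ ∈ interior K)
    (h0 : h xs = 0) (hv : gradient h xs ≠ 0) :
    0 < (inner ℝ (gradient h xs) (x₀ - xs) : ℝ) := by
  set v := gradient h xs with hvdef
  have key : ∀ y ∈ K, 0 ≤ (inner ℝ v (y - xs) : ℝ) := by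
    intro y hy
    have hseg : ∀ t : ℝ, t ∈ Set.Icc (0:ℝ) 1 → 0 ≤ h (xs + t • (y - xs)) := by
      intro t ht
      exact hKnn _ (hKconv.add_smul_sub_mem hxs hy ht)
    have := aux_deriv_nonneg_of_seg hh h0 hseg
    rw [hvdef, aux_inner_gradient]
    exact this
  obtain ⟨ε, hε, hball⟩ := Metric.isOpen_iff.mp isOpen_interior x₀ hx₀
  have hvn : (0:ℝ) < ‖v‖ := norm_pos_iff.mpr hv
  set c : ℝ := ε / (2 * ‖v‖) with hc
  have hcpos : 0 < c := div_pos hε (by positivity)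
  have hcε : c * ‖v‖ = ε / 2 := by rw [hc]; field_simp
  have hyK : x₀ - c • v ∈ K := by
    apply interior_subset; apply hball
    rw [Metric.mem_ball, dist_eq_norm]
    have hn : ‖x₀ - c • v - x₀‖ = c * ‖v‖ := by
      rw [sub_sub_cancel_left, norm_neg, norm_smul, Real.norm_of_nonneg hcpos.le]
    rw [hn, hcε]; linarith
  have h2 := key _ hyK
  have hexp : (inner ℝ v (x₀ - c • v - xs) : ℝ) = inner ℝ v (x₀ - xs) - c * ‖v‖^2 := by
    rw [show x₀ - c • v - xs = (x₀ - xs) - c • v by abel, inner_sub_right,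
      real_inner_smul_right, real_inner_self_eq_norm_sq]
  nlinarith [h2, hexp, mul_pos hcpos (pow_pos hvn 2)]

end Aux

theorem barrier_stationary_limit_KKT (n m : ℕ)
    (g : Fin m → EuclideanSpace ℝ (Fin n) → ℝ)
    (f : EuclideanSpace ℝ (Fin n) → ℝ)
    (hg : ∀ j, ContDiff ℝ 1 (g j)) (hf : ContDiff ℝ 1 f)
    (hfconv : ConvexOn ℝ Set.univ f)
    (K : Set (EuclideanSpace ℝ (Fin n)))
    (hKdef : K = {x | ∀ j, 0 ≤ g j x})
    (hKconv : Convex ℝ K) (hKcomp : IsCompact K)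
    (slater : ∃ x₀, ∀ j, 0 < g j x₀)
    (nondeg : ∀ j, ∀ x ∈ K, g j x = 0 → gradient (g j) x ≠ 0)
    (μ : ℕ → ℝ) (hμpos : ∀ ℓ, 0 < μ ℓ)
    (hμ0 : Tendsto μ atTop (nhds 0))
    (x : ℕ → EuclideanSpace ℝ (Fin n))
    (hfeas : ∀ ℓ j, 0 < g j (x ℓ))
    (hstat : ∀ ℓ, gradient f (x ℓ) =
      ∑ j, (μ ℓ / g j (x ℓ)) • gradient (g j) (x ℓ))
    (xs : EuclideanSpace ℝ (Fin n)) (hxs : xs ∈ K)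
    (hlim : Tendsto x atTop (nhds xs))
    (hgrad : gradient f xs ≠ 0) :
    ∃ l : Fin m → ℝ, (∀ j, 0 ≤ l j) ∧ (∀ j, l j * g j xs = 0) ∧
      gradient f xs = ∑ j, l j • gradient (g j) xs := by
  classical
  obtain ⟨x₀, hx₀⟩ := slater
  -- x₀ is in the interior of K
  have hKmem : ∀ y, y ∈ K ↔ ∀ j, 0 ≤ g j y := by intro y; rw [hKdef]; rfl
  have hx₀int : x₀ ∈ interior K := by
    have hUopen : IsOpen {y : EuclideanSpace ℝ (Fin n) | ∀ j, 0 < g j y} := by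
      have : {y : EuclideanSpace ℝ (Fin n) | ∀ j, 0 < g j y}
          = ⋂ j, (g j) ⁻¹' Set.Ioi 0 := by
        ext y; simp [Set.mem_iInter]
      rw [this]
      exact isOpen_iInter_of_finite fun j => (hg j).continuous.isOpen_preimage _ isOpen_Ioi
    exact interior_maximal (fun y hy => (hKmem y).mpr fun j => (hy j).le) hUopen hx₀
  -- notation
  set d : EuclideanSpace ℝ (Fin n) := x₀ - xs with hd
  set lam : ℕ → Fin m → ℝ := fun ℓ j => μ ℓ / g j (x ℓ) with hlam
  have hlampos : ∀ ℓ j, 0 < lam ℓ j := fun ℓ j => div_pos (hμpos ℓ) (hfeas ℓ j)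
  have hgx : ∀ j, Tendsto (fun ℓ => g j (x ℓ)) atTop (nhds (g j xs)) :=
    fun j => ((hg j).continuous.tendsto xs).comp hlim
  have hgsnn : ∀ j, 0 ≤ g j xs := (hKmem xs).mp hxs
  -- inactive constraints: multipliers tend to 0
  have hinactive : ∀ j, 0 < g j xs → Tendsto (fun ℓ => lam ℓ j) atTop (nhds 0) := by
    intro j hj
    have := hμ0.div (hgx j) (ne_of_gt hj)
    rw [zero_div] at this
    exact this
  -- active constraints: positive inner product with d
  have hc : ∀ j, g j xs = 0 → 0 < (inner ℝ (gradient (g j) xs) d : ℝ) := by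
    intro j hj
    exact aux_inner_pos_active (hg j) hKconv (fun y hy => (hKmem y).mp hy j) hxs hx₀int hj
      (nondeg j xs hxs hj)
  -- gradient continuity limits
  have hfgrad : Tendsto (fun ℓ => gradient f (x ℓ)) atTop (nhds (gradient f xs)) :=
    ((aux_grad_cont hf).tendsto xs).comp hlim
  have hggrad : ∀ j, Tendsto (fun ℓ => gradient (g j) (x ℓ)) atTop
      (nhds (gradient (g j) xs)) :=
    fun j => ((aux_grad_cont (hg j)).tendsto xs).comp hlim
  -- inner products with d
  set u : ℕ → Fin m → ℝ := fun ℓ j => lam ℓ j * (inner ℝ (gradient (g j) (x ℓ)) d : ℝ)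
    with hu
  have hT : ∀ ℓ, (inner ℝ (gradient f (x ℓ)) d : ℝ) = ∑ j, u ℓ j := by
    intro ℓ
    rw [hstat ℓ, sum_inner]
    exact Finset.sum_congr rfl fun j _ => real_inner_smul_left _ _ _
  have hTlim : Tendsto (fun ℓ => (inner ℝ (gradient f (x ℓ)) d : ℝ)) atTop
      (nhds (inner ℝ (gradient f xs) d : ℝ)) := hfgrad.inner tendsto_const_nhds
  have hginner : ∀ j, Tendsto (fun ℓ => (inner ℝ (gradient (g j) (x ℓ)) d : ℝ)) atTop
      (nhds (inner ℝ (gradient (g j) xs) d : ℝ)) :=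
    fun j => (hggrad j).inner tendsto_const_nhds
  set C : ℝ := (inner ℝ (gradient f xs) d : ℝ) with hC
  -- eventually all u ℓ j ≥ -1
  have hu1 : ∀ᶠ ℓ in atTop, ∀ j, -1 ≤ u ℓ j := by
    rw [eventually_all]
    intro j
    rcases (hgsnn j).eq_or_lt with hj | hj
    · -- active: eventually u > 0
      have hev := (hginner j).eventually (eventually_gt_nhds (half_lt_self (hc j hj.symm)))
      filter_upwards [hev] with ℓ hℓ
      have : 0 < u ℓ j := mul_pos (hlampos ℓ j) (lt_trans (half_pos (hc j hj.symm)) hℓ)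
      linarith
    · -- inactive: u → 0
      have hulim : Tendsto (fun ℓ => u ℓ j) atTop (nhds 0) := by
        have := (hinactive j hj).mul (hginner j)
        rw [zero_mul] at this
        exact this
      have := hulim.eventually (eventually_gt_nhds (show (-1:ℝ) < 0 by norm_num))
      filter_upwards [this] with ℓ h
      exact h.le
  -- per-coordinate eventual bounds on the multipliers
  have hbound : ∀ j, ∃ B : ℝ, ∀ᶠ ℓ in atTop, lam ℓ j ≤ B := by
    intro j
    rcases (hgsnn j).eq_or_lt with hj | hj
    · -- active constraint
      set cj : ℝ := (inner ℝ (gradient (g j) xs) d : ℝ) with hcj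
      have hcjpos : 0 < cj := hc j hj.symm
      refine ⟨(C + 1 + m) / (cj / 2), ?_⟩
      have hev1 := hTlim.eventually (eventually_lt_nhds (show C < C + 1 by linarith))
      have hev2 := (hginner j).eventually (eventually_gt_nhds (half_lt_self hcjpos))
      filter_upwards [hev1, hev2, hu1] with ℓ h1 h2 h3
      -- sum of the other terms is at least -m
      have hsum : -(m:ℝ) ≤ ∑ j' ∈ Finset.univ.erase j, u ℓ j' := by
        have h4 : ∑ j' ∈ Finset.univ.erase j, (-1:ℝ) ≤ ∑ j' ∈ Finset.univ.erase j, u ℓ j' :=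
          Finset.sum_le_sum fun j' _ => h3 j'
        have h5 : ∑ j' ∈ Finset.univ.erase j, (-1:ℝ) = -((Finset.univ.erase j).card : ℝ) := by
          simp
        have h6 : ((Finset.univ.erase j).card : ℝ) ≤ (m:ℝ) := by
          have := Finset.card_erase_le (s := (Finset.univ : Finset (Fin m))) (a := j)
          simp only [Finset.card_univ, Fintype.card_fin] at this
          exact_mod_cast this
        linarith
      have hsplit : ∑ j', u ℓ j' = u ℓ j + ∑ j' ∈ Finset.univ.erase j, u ℓ j' := by
        rw [← Finset.add_sum_erase _ _ (Finset.mem_univ j)]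
      have hTle : (inner ℝ (gradient f (x ℓ)) d : ℝ) = ∑ j', u ℓ j' := hT ℓ
      have huj : u ℓ j ≤ C + 1 + m := by
        have := hTle ▸ h1
        rw [hsplit] at hTle
        linarith
      -- from u ℓ j = lam * inner and inner ≥ cj/2
      have hlow : lam ℓ j * (cj / 2) ≤ u ℓ j :=
        mul_le_mul_of_nonneg_left h2.le (hlampos ℓ j).le
      rw [le_div_iff₀ (by linarith : (0:ℝ) < cj / 2)]
      linarith
    · -- inactive constraint
      refine ⟨1, ?_⟩
      filter_upwards [(hinactive j hj).eventually
        (eventually_lt_nhds (show (0:ℝ) < 1 by norm_num))] with ℓ h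
      exact h.le
  choose B hB using hbound
  set B' : ℝ := 1 + ∑ j, |B j| with hB'
  have hB'nn : (0:ℝ) ≤ B' := by positivity
  have hBle : ∀ j, B j ≤ B' := by
    intro j
    have h1 : |B j| ≤ ∑ j', |B j'| :=
      Finset.single_le_sum (fun j' _ => abs_nonneg (B j')) (Finset.mem_univ j)
    calc B j ≤ |B j| := le_abs_self _
    _ ≤ B' := by rw [hB']; linarith
  have hball : ∀ᶠ ℓ in atTop, lam ℓ ∈ Metric.closedBall (0 : Fin m → ℝ) B' := by
    filter_upwards [eventually_all.mpr hB] with ℓ hℓ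
    rw [mem_closedBall_zero_iff, pi_norm_le_iff_of_nonneg hB'nn]
    intro j
    rw [Real.norm_eq_abs, abs_of_pos (hlampos ℓ j)]
    exact le_trans (hℓ j) (hBle j)
  obtain ⟨N, hN⟩ := eventually_atTop.mp hball
  obtain ⟨a, -, φ, hφ, hconv⟩ := tendsto_subseq_of_bounded
    (Metric.isBounded_closedBall (x := (0 : Fin m → ℝ)) (r := B'))
    (x := fun ℓ => lam (ℓ + N)) (fun ℓ => hN _ (Nat.le_add_left N ℓ))
  set ψ : ℕ → ℕ := fun ℓ => φ ℓ + N with hψdef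
  have hψ : Tendsto ψ atTop atTop :=
    tendsto_atTop_mono (fun ℓ => Nat.le_add_right _ _) hφ.tendsto_atTop
  have hcoord : ∀ j, Tendsto (fun ℓ => lam (ψ ℓ) j) atTop (nhds (a j)) :=
    fun j => tendsto_pi_nhds.mp hconv j
  refine ⟨a, ?_, ?_, ?_⟩
  · intro j
    exact ge_of_tendsto (hcoord j) (Eventually.of_forall fun ℓ => (hlampos _ j).le)
  · intro j
    rcases (hgsnn j).eq_or_lt with hj | hj
    · rw [← hj, mul_zero]
    · have : a j = 0 := tendsto_nhds_unique (hcoord j) ((hinactive j hj).comp hψ)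
      rw [this, zero_mul]
  · have h1 : Tendsto (fun ℓ => ∑ j, lam (ψ ℓ) j • gradient (g j) (x (ψ ℓ))) atTop
        (nhds (∑ j, a j • gradient (g j) xs)) :=
      tendsto_finset_sum _ fun j _ => (hcoord j).smul ((hggrad j).comp hψ)
    have h2 : Tendsto (fun ℓ => gradient f (x (ψ ℓ))) atTop (nhds (gradient f xs)) :=
      hfgrad.comp hψ
    have h3 : (fun ℓ => gradient f (x (ψ ℓ)))
        = fun ℓ => ∑ j, lam (ψ ℓ) j • gradient (g j) (x (ψ ℓ)) :=
      funext fun ℓ => hstat (ψ ℓ)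
    rw [h3] at h2
    exact tendsto_nhds_unique h2 h1
end

section
/- Let f : ℝⁿ → ℝ be convex and continuously differentiable and K ⊂ ℝⁿ any set. If x ∈ K, λ ∈ ℝ^m with λ ≥ 0, gⱼ : ℝⁿ → ℝ are C¹ with gⱼ ≥ 0 on K (so K ⊂ {x : gⱼ(x) ≥ 0} for each j), λⱼ gⱼ(x) = 0 for all j, ∇f(x) = ∑ⱼ λⱼ ∇gⱼ(x), and each set {y : gⱼ(y) ≥ 0} with λⱼ > 0 is convex with ∇gⱼ(x) ≠ 0, then ⟨∇f(x), y − x⟩ ≥ 0 for all y ∈ K, hence x minimizes f on K. -/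
open Real
open scoped RealInnerProductSpace

/-- If φ has derivative d at 0 and the slopes from the right are at most c, then d ≤ c. -/
lemma deriv_le_of_slope_le (φ : ℝ → ℝ) (d c : ℝ) (hφ : HasDerivAt φ d 0)
    (h : ∀ t ∈ Set.Ioo (0:ℝ) 1, φ t - φ 0 ≤ t * c) : d ≤ c := by
  have htend : Filter.Tendsto (slope φ 0) (nhdsWithin 0 (Set.Ioi 0)) (nhds d) :=
    (hasDerivAt_iff_tendsto_slope.1 hφ).mono_left
      (nhdsWithin_mono 0 fun t ht => ne_of_gt ht)
  refine le_of_tendsto htend ?_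
  filter_upwards [Ioo_mem_nhdsGT_of_mem (Set.mem_Ico.2 ⟨le_rfl, one_pos⟩)] with t ht
  have ht0 : (0:ℝ) < t := ht.1
  rw [slope_def_field, show t - (0:ℝ) = t by ring, div_le_iff₀ ht0]
  linarith [h t ht]

lemma le_deriv_of_le_slope (φ : ℝ → ℝ) (d c : ℝ) (hφ : HasDerivAt φ d 0)
    (h : ∀ t ∈ Set.Ioo (0:ℝ) 1, t * c ≤ φ t - φ 0) : c ≤ d := by
  have := deriv_le_of_slope_le (fun t => -φ t) (-d) (-c) hφ.neg ?_
  · linarith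
  · intro t ht
    have := h t ht
    linarith [mul_neg t c]

lemma dirDeriv {n : ℕ} (f : EuclideanSpace ℝ (Fin n) → ℝ) (hf : ContDiff ℝ 1 f)
    (x u : EuclideanSpace ℝ (Fin n)) :
    HasDerivAt (fun t : ℝ => f (x + t • u)) ⟪gradient f x, u⟫ 0 := by
  have hline : HasDerivAt (fun t : ℝ => x + t • u) u 0 := by
    simpa using ((hasDerivAt_id (0:ℝ)).smul_const u).const_add x
  have hF : HasGradientAt f (gradient f x) x :=
    ((hf.differentiable one_ne_zero) x).hasGradientAt
  have hF' := hF.hasFDerivAt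
  have hx0 : x + (0:ℝ) • u = x := by simp
  rw [← hx0] at hF'
  have := hF'.comp_hasDerivAt 0 hline
  simp at this ⊢
  exact this

theorem KKT_sufficiency (n m : ℕ)
    (f : EuclideanSpace ℝ (Fin n) → ℝ)
    (hf : ContDiff ℝ 1 f) (hfconv : ConvexOn ℝ Set.univ f)
    (K : Set (EuclideanSpace ℝ (Fin n)))
    (g : Fin m → EuclideanSpace ℝ (Fin n) → ℝ)
    (hg : ∀ j, ContDiff ℝ 1 (g j))
    (hgK : ∀ j, ∀ y ∈ K, 0 ≤ g j y)
    (x : EuclideanSpace ℝ (Fin n)) (hx : x ∈ K)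
    (l : Fin m → ℝ) (hl : ∀ j, 0 ≤ l j)
    (hcs : ∀ j, l j * g j x = 0)
    (hstat : gradient f x = ∑ j, l j • gradient (g j) x)
    (hconv : ∀ j, 0 < l j → Convex ℝ {y | 0 ≤ g j y} ∧ gradient (g j) x ≠ 0) :
    (∀ y ∈ K, 0 ≤ ⟪gradient f x, y - x⟫) ∧ ∀ y ∈ K, f x ≤ f y := by
  have part1 : ∀ y ∈ K, 0 ≤ ⟪gradient f x, y - x⟫ := by
    intro y hy
    set u := y - x with hu
    have key : ∀ j, 0 ≤ l j * ⟪gradient (g j) x, u⟫ := by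
      intro j
      rcases (hl j).eq_or_lt with h | h
      · rw [← h, zero_mul]
      · have hgx0 : g j x = 0 := by
          have := hcs j
          have hln : l j ≠ 0 := ne_of_gt h
          exact (mul_eq_zero.1 this).resolve_left hln
        obtain ⟨hKconv, _⟩ := hconv j h
        have hinner : 0 ≤ ⟪gradient (g j) x, u⟫ := by
          refine le_deriv_of_le_slope _ _ _ (dirDeriv (g j) (hg j) x u) ?_
          intro t ht
          have hxin : x ∈ {y | 0 ≤ g j y} := by simp [hgx0]
          have hyin : y ∈ {y | 0 ≤ g j y} := hgK j y hy
          have hmem := hKconv hxin hyin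
            (show (0:ℝ) ≤ 1 - t by linarith [ht.2]) ht.1.le (show (1:ℝ) - t + t = 1 by ring)
          have heq : (1 - t) • x + t • y = x + t • u := by
            rw [hu]; module
          rw [heq] at hmem
          have : (0:ℝ) ≤ g j (x + t • u) := hmem
          simp only [zero_smul, add_zero, mul_zero]
          simp [hgx0]
          linarith [this]
        positivity
    have hexp : ⟪gradient f x, u⟫ = ∑ j, l j * ⟪gradient (g j) x, u⟫ := by
      rw [hstat, sum_inner]
      congr 1
      ext j
      rw [real_inner_smul_left]
    rw [hexp]
    exact Finset.sum_nonneg fun j _ => key j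
  refine ⟨part1, ?_⟩
  intro y hy
  set u := y - x with hu
  have hd : ⟪gradient f x, u⟫ ≤ f y - f x := by
    refine deriv_le_of_slope_le _ _ _ (dirDeriv f hf x u) ?_
    intro t ht
    have hcvx := hfconv.2 (Set.mem_univ x) (Set.mem_univ y)
      (show (0:ℝ) ≤ 1 - t by linarith [ht.2]) ht.1.le (show (1:ℝ) - t + t = 1 by ring)
    have heq : (1 - t) • x + t • y = x + t • u := by
      rw [hu]; module
    rw [heq] at hcvx
    have h0 : x + (0:ℝ) • u = x := by simp
    rw [h0]
    simp only [smul_eq_mul] at hcvx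
    nlinarith [hcvx]
  have := part1 y hy
  linarith
end

section
/- Let K = {x ∈ ℝⁿ : gⱼ(x) ≥ 0, j=1,…,m} be compact and convex with C¹ constraints gⱼ satisfying Slater's condition and nondegeneracy, and let f be convex C¹ with a unique global minimizer x* on K. For each μ > 0 let x_μ be any stationary point of the log-barrier φ_μ. Then x_μ → x* as μ → 0. -/
open Real Filter InnerProductSpace Set Topology

variable {E : Type*} [NormedAddCommGroup E] [InnerProductSpace ℝ E] [CompleteSpace E]

lemma inner_gradient_apply (h : E → ℝ) (z v : E) :
    @inner ℝ _ _ (gradient h z) v = fderiv ℝ h z v := by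
  simp [gradient, toDual_symm_apply]

lemma continuous_gradient (h : E → ℝ) (hh : ContDiff ℝ 1 h) :
    Continuous (fun z => gradient h z) := by
  have : Continuous (fderiv ℝ h) := hh.continuous_fderiv one_ne_zero
  exact ((toDual ℝ E).symm.continuous).comp this

lemma hasDerivAt_line (h : E → ℝ) (x d : E) (hd : DifferentiableAt ℝ h x) :
    HasDerivAt (fun t : ℝ => h (x + t • d)) (@inner ℝ _ _ (gradient h x) d) 0 := by
  have hc : HasDerivAt (fun t : ℝ => x + t • d) d 0 := by
    simpa using ((hasDerivAt_id (0:ℝ)).smul_const d).const_add x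
  have h0 : (fun t : ℝ => x + t • d) 0 = x := by simp
  have h2 : HasFDerivAt h (fderiv ℝ h x) ((fun t : ℝ => x + t • d) 0) := by
    rw [h0]; exact hd.hasFDerivAt
  have := h2.comp_hasDerivAt 0 hc
  rw [inner_gradient_apply]
  exact this

lemma slope_tendsto {h : ℝ → ℝ} {d : ℝ} (hd : HasDerivAt h d 0) :
    Tendsto (fun t => (h t - h 0) / t) (𝓝[>] (0:ℝ)) (𝓝 d) := by
  have := hasDerivAt_iff_tendsto_slope.mp hd
  have hle : 𝓝[>] (0:ℝ) ≤ 𝓝[≠] (0:ℝ) :=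
    nhdsWithin_mono _ (fun t ht => ne_of_gt ht)
  have := this.mono_left hle
  refine this.congr' ?_
  filter_upwards [self_mem_nhdsWithin] with t ht
  simp [slope_def_field, div_eq_inv_mul]

lemma convex_grad_ineq {f : E → ℝ} (hf : ContDiff ℝ 1 f)
    (hconv : ConvexOn ℝ Set.univ f) (x y : E) :
    @inner ℝ _ _ (gradient f x) (y - x) ≤ f y - f x := by
  have hdiff : DifferentiableAt ℝ f x := (hf.differentiable one_ne_zero) x
  have hline := hasDerivAt_line f x (y - x) hdiff
  have hslope := slope_tendsto hline
  refine le_of_tendsto hslope ?_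
  filter_upwards [Ioo_mem_nhdsGT_of_mem (by norm_num : (0:ℝ) ∈ Set.Ico 0 1)] with t ht
  have ht0 : 0 < t := ht.1
  have ht1 : t < 1 := ht.2
  have hpt : x + t • (y - x) = (1 - t) • x + t • y := by
    rw [smul_sub]; module
  have hcvx := hconv.2 (Set.mem_univ x) (Set.mem_univ y)
    (by linarith : (0:ℝ) ≤ 1 - t) (le_of_lt ht0) (by ring)
  rw [← hpt] at hcvx
  have h0 : x + (0:ℝ) • (y - x) = x := by simp
  simp only [smul_eq_mul] at hcvx
  rw [h0, div_le_iff₀ ht0]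
  nlinarith [hcvx]

lemma first_order_min {h : E → ℝ} (hh : ContDiff ℝ 1 h) {K : Set E} (hK : Convex ℝ K)
    {z : E} (hz : z ∈ K) (hmin : ∀ y ∈ K, h z ≤ h y) {y : E} (hy : y ∈ K) :
    0 ≤ @inner ℝ _ _ (gradient h z) (y - z) := by
  have hdiff : DifferentiableAt ℝ h z := (hh.differentiable one_ne_zero) z
  have hline := hasDerivAt_line h z (y - z) hdiff
  have hslope := slope_tendsto hline
  refine ge_of_tendsto hslope ?_
  filter_upwards [Ioo_mem_nhdsGT_of_mem (by norm_num : (0:ℝ) ∈ Set.Ico 0 1)] with t ht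
  have ht0 : 0 < t := ht.1
  have hpt : z + t • (y - z) = (1 - t) • z + t • y := by
    rw [smul_sub]; module
  have hmem : z + t • (y - z) ∈ K := by
    rw [hpt]
    exact hK hz hy (by linarith [ht.2] : (0:ℝ) ≤ 1 - t) (le_of_lt ht0) (by ring)
  have h0 : z + (0:ℝ) • (y - z) = z := by simp
  rw [h0]
  have := hmin _ hmem
  exact div_nonneg (by linarith) (le_of_lt ht0)

lemma slater_strict {h : E → ℝ} (hh : ContDiff ℝ 1 h) {K : Set E} (hK : Convex ℝ K)
    {z x₀ : E} (hz : z ∈ K) (hnn : ∀ y ∈ K, 0 ≤ h y) (hz0 : h z = 0)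
    (hG : gradient h z ≠ 0) {r : ℝ} (hr : 0 < r) (hball : Metric.ball x₀ r ⊆ K) :
    0 < @inner ℝ _ _ (gradient h z) (x₀ - z) := by
  set G := gradient h z with hGdef
  have hGnorm : 0 < ‖G‖ := norm_pos_iff.mpr hG
  set c : ℝ := r / (2 * ‖G‖) with hc
  have hcpos : 0 < c := div_pos hr (by positivity)
  have hymem : x₀ - c • G ∈ K := by
    apply hball
    rw [Metric.mem_ball, dist_eq_norm]
    have : x₀ - c • G - x₀ = -(c • G) := by abel
    rw [this, norm_neg, norm_smul, Real.norm_eq_abs, abs_of_pos hcpos]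
    rw [hc, div_mul_eq_mul_div]
    rw [div_lt_iff₀ (by positivity : (0:ℝ) < 2 * ‖G‖)]
    nlinarith
  have hmin : ∀ y ∈ K, h z ≤ h y := fun y hy => hz0 ▸ hnn y hy
  have h1 : 0 ≤ @inner ℝ _ _ G (x₀ - c • G - z) := first_order_min hh hK hz hmin hymem
  have h2 : @inner ℝ _ _ G (x₀ - c • G - z) =
      @inner ℝ _ _ G (x₀ - z) - c * @inner ℝ _ _ G G := by
    have : x₀ - c • G - z = (x₀ - z) - c • G := by abel
    rw [this, inner_sub_right, real_inner_smul_right]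
  have h3 : @inner ℝ _ _ G G = ‖G‖ ^ 2 := real_inner_self_eq_norm_sq G
  have h4 : 0 < c * ‖G‖ ^ 2 := by positivity
  rw [h2, h3] at h1
  linarith

open RealInnerProductSpace in
lemma core_cluster_min {m : ℕ} (g : Fin m → E → ℝ) (f : E → ℝ)
    (hg : ∀ j, ContDiff ℝ 1 (g j)) (hf : ContDiff ℝ 1 f)
    (hfconv : ConvexOn ℝ Set.univ f)
    (K : Set E) (hKdef : K = {x | ∀ j, 0 ≤ g j x}) (hKconv : Convex ℝ K)
    (x₀ : E) (hx₀ : ∀ j, 0 < g j x₀)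
    (nondeg : ∀ j, ∀ x ∈ K, g j x = 0 → gradient (g j) x ≠ 0)
    (x : ℝ → E)
    (hfeas : ∀ μ ∈ Set.Ioi (0:ℝ), ∀ j, 0 < g j (x μ))
    (hstat : ∀ μ ∈ Set.Ioi (0:ℝ), gradient f (x μ) =
      ∑ j, (μ / g j (x μ)) • gradient (g j) (x μ))
    (xb : E) (hxbK : xb ∈ K)
    (u : ℕ → ℝ) (hupos : ∀ᶠ k in atTop, 0 < u k)
    (hu0 : Tendsto u atTop (𝓝 0))
    (hxu : Tendsto (fun k => x (u k)) atTop (𝓝 xb)) :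
    ∀ y ∈ K, f xb ≤ f y := by
  intro y hy
  set p : ℕ → E := fun k => x (u k) with hp
  -- ball around slater point inside K
  have hSopen : IsOpen {z : E | ∀ j, 0 < g j z} := by
    have : {z : E | ∀ j, 0 < g j z} = ⋂ j, (g j) ⁻¹' Set.Ioi 0 := by
      ext z; simp [Set.mem_iInter]
    rw [this]
    exact isOpen_iInter_of_finite fun j => (hg j).continuous.isOpen_preimage _ isOpen_Ioi
  have hSsub : {z : E | ∀ j, 0 < g j z} ⊆ K := by
    intro z hz; rw [hKdef]; exact fun j => le_of_lt (hz j)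
  obtain ⟨r, hr, hball⟩ := Metric.isOpen_iff.mp hSopen x₀ hx₀
  have hballK : Metric.ball x₀ r ⊆ K := hball.trans hSsub
  -- basic limits
  have hgp : ∀ j, Tendsto (fun k => g j (p k)) atTop (𝓝 (g j xb)) :=
    fun j => ((hg j).continuous.tendsto xb).comp hxu
  have hGp : ∀ j, Tendsto (fun k => gradient (g j) (p k)) atTop (𝓝 (gradient (g j) xb)) :=
    fun j => ((continuous_gradient (g j) (hg j)).tendsto xb).comp hxu
  have hGf : Tendsto (fun k => gradient f (p k)) atTop (𝓝 (gradient f xb)) :=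
    ((continuous_gradient f hf).tendsto xb).comp hxu
  have hgpos : ∀ᶠ k in atTop, ∀ j, 0 < g j (p k) := by
    filter_upwards [hupos] with k hk j
    exact hfeas (u k) hk j
  have hlamnn : ∀ᶠ k in atTop, ∀ j, 0 ≤ u k / g j (p k) := by
    filter_upwards [hupos, hgpos] with k hk hk2 j
    exact div_nonneg (le_of_lt hk) (le_of_lt (hk2 j))
  have hxbnn : ∀ j, 0 ≤ g j xb := by rw [hKdef] at hxbK; exact hxbK
  -- paired stationarity
  have hpair : ∀ᶠ k in atTop, ∀ v : E,
      ⟪gradient f (p k), v⟫ = ∑ j, (u k / g j (p k)) * ⟪gradient (g j) (p k), v⟫ := by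
    filter_upwards [hupos] with k hk v
    rw [hp]
    rw [hstat (u k) hk, sum_inner]
    congr 1; ext j
    rw [real_inner_smul_left]
  -- limits of paired quantities
  have ha : ∀ j, Tendsto (fun k => ⟪gradient (g j) (p k), x₀ - p k⟫) atTop
      (𝓝 (⟪gradient (g j) xb, x₀ - xb⟫)) :=
    fun j => (hGp j).inner (tendsto_const_nhds.sub hxu)
  have hS : Tendsto (fun k => ⟪gradient f (p k), x₀ - p k⟫) atTop
      (𝓝 (⟪gradient f xb, x₀ - xb⟫)) := hGf.inner (tendsto_const_nhds.sub hxu)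
  -- inactive constraints: multipliers tend to 0
  have hinact : ∀ j, 0 < g j xb → Tendsto (fun k => u k / g j (p k)) atTop (𝓝 0) := by
    intro j hj
    have := hu0.div (hgp j) (ne_of_gt hj)
    rw [zero_div] at this; exact this
  -- active constraints: strict slater inner product
  have hact : ∀ j, g j xb = 0 → 0 < ⟪gradient (g j) xb, x₀ - xb⟫ := by
    intro j hj
    refine slater_strict (hg j) hKconv hxbK ?_ hj (nondeg j xb hxbK hj) hr hballK
    intro z hz; rw [hKdef] at hz; exact hz j
  -- each term with direction x₀ - p k is eventually ≥ -1
  have hterm : ∀ i, ∀ᶠ k in atTop,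
      (-1:ℝ) ≤ (u k / g i (p k)) * ⟪gradient (g i) (p k), x₀ - p k⟫ := by
    intro i
    rcases eq_or_lt_of_le (hxbnn i) with hi | hi
    · -- active
      have hci := hact i hi.symm
      have hev : ∀ᶠ k in atTop, 0 < ⟪gradient (g i) (p k), x₀ - p k⟫ :=
        (ha i).eventually (eventually_gt_nhds hci)
      filter_upwards [hev, hlamnn] with k h1 h2
      have := mul_nonneg (h2 i) (le_of_lt h1)
      linarith
    · -- inactive
      have := ((hinact i hi).mul (ha i))
      rw [zero_mul] at this
      have hev := this.eventually (eventually_gt_nhds (by norm_num : (-1:ℝ) < 0))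
      filter_upwards [hev] with k hk
      exact le_of_lt hk
  -- boundedness of multipliers
  have hbdd : ∀ j, ∃ B : ℝ, ∀ᶠ k in atTop, u k / g j (p k) ≤ B := by
    intro j
    rcases eq_or_lt_of_le (hxbnn j) with hj | hj
    · -- active
      set cj := ⟪gradient (g j) xb, x₀ - xb⟫ with hcj
      have hcjpos : 0 < cj := hact j hj.symm
      set Sb := ⟪gradient f xb, x₀ - xb⟫ with hSb
      refine ⟨(Sb + 1 + m) / (cj / 2), ?_⟩
      have hevS : ∀ᶠ k in atTop, ⟪gradient f (p k), x₀ - p k⟫ ≤ Sb + 1 :=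
        hS.eventually (eventually_lt_nhds (by linarith)) |>.mono fun k hk => le_of_lt hk
      have hevaj : ∀ᶠ k in atTop, cj / 2 ≤ ⟪gradient (g j) (p k), x₀ - p k⟫ :=
        (ha j).eventually (eventually_gt_nhds (by linarith)) |>.mono fun k hk => le_of_lt hk
      have hallterm : ∀ᶠ k in atTop, ∀ i,
          (-1:ℝ) ≤ (u k / g i (p k)) * ⟪gradient (g i) (p k), x₀ - p k⟫ :=
        eventually_all.mpr hterm
      filter_upwards [hevS, hevaj, hallterm, hlamnn, hpair] with k h1 h2 h3 h4 h5
      have hsum := h5 (x₀ - p k)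
      have hsplit : ∑ i, (u k / g i (p k)) * ⟪gradient (g i) (p k), x₀ - p k⟫ =
          (∑ i ∈ Finset.univ.erase j, (u k / g i (p k)) * ⟪gradient (g i) (p k), x₀ - p k⟫)
          + (u k / g j (p k)) * ⟪gradient (g j) (p k), x₀ - p k⟫ :=
        (Finset.sum_erase_add _ _ (Finset.mem_univ j)).symm
      have hrest : (-(m:ℝ)) ≤
          ∑ i ∈ Finset.univ.erase j, (u k / g i (p k)) * ⟪gradient (g i) (p k), x₀ - p k⟫ := by
        have h6 : ∑ i ∈ Finset.univ.erase j, (-1:ℝ) ≤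
            ∑ i ∈ Finset.univ.erase j, (u k / g i (p k)) * ⟪gradient (g i) (p k), x₀ - p k⟫ :=
          Finset.sum_le_sum fun i _ => h3 i
        have h7 : (∑ _i ∈ Finset.univ.erase j, (-1:ℝ)) = -((Finset.univ.erase j).card : ℝ) := by
          rw [Finset.sum_const]; simp
        have h8 : ((Finset.univ.erase j).card : ℝ) ≤ m := by
          have := Finset.card_le_card (Finset.erase_subset j Finset.univ)
          have hcard : (Finset.univ : Finset (Fin m)).card = m := Finset.card_univ.trans (Fintype.card_fin m)
          exact_mod_cast hcard ▸ this
        linarith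
      have hkey : (u k / g j (p k)) * (cj / 2) ≤ Sb + 1 + m := by
        have hmul : (u k / g j (p k)) * (cj / 2) ≤
            (u k / g j (p k)) * ⟪gradient (g j) (p k), x₀ - p k⟫ :=
          mul_le_mul_of_nonneg_left h2 (h4 j)
        rw [hsum, hsplit] at h1
        linarith
      rw [le_div_iff₀ (by linarith : 0 < cj / 2)]
      exact hkey
    · -- inactive
      refine ⟨1, ?_⟩
      exact ((hinact j hj).eventually (eventually_lt_nhds (by norm_num : (0:ℝ) < 1))).mono
        fun k hk => le_of_lt hk
  -- final estimate with direction y - p k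
  have hb : ∀ j, Tendsto (fun k => ⟪gradient (g j) (p k), y - p k⟫) atTop
      (𝓝 (⟪gradient (g j) xb, y - xb⟫)) :=
    fun j => (hGp j).inner (tendsto_const_nhds.sub hxu)
  have hbnn : ∀ j, g j xb = 0 → 0 ≤ ⟪gradient (g j) xb, y - xb⟫ := by
    intro j hj
    have hmin : ∀ z ∈ K, g j xb ≤ g j z := by
      intro z hz; rw [hKdef] at hz; rw [hj]; exact hz j
    exact first_order_min (hg j) hKconv hxbK hmin hy
  have hfp : Tendsto (fun k => f (p k)) atTop (𝓝 (f xb)) := (hf.continuous.tendsto xb).comp hxu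
  refine le_of_forall_pos_le_add ?_
  intro ε hε
  set ε' : ℝ := ε / (m + 1) with hε'
  have hε'pos : 0 < ε' := by positivity
  have hterm2 : ∀ j, ∀ᶠ k in atTop,
      -ε' ≤ (u k / g j (p k)) * ⟪gradient (g j) (p k), y - p k⟫ := by
    intro j
    rcases eq_or_lt_of_le (hxbnn j) with hj | hj
    · -- active
      obtain ⟨B, hB⟩ := hbdd j
      set B' := max B 0 with hB'
      have hB'nn : 0 ≤ B' := le_max_right _ _
      set bj := ⟪gradient (g j) xb, y - xb⟫ with hbj
      have hbjnn : 0 ≤ bj := hbnn j hj.symm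
      have hδ : 0 < ε' / (B' + 1) := by positivity
      have hev : ∀ᶠ k in atTop,
          dist (⟪gradient (g j) (p k), y - p k⟫) bj < ε' / (B' + 1) :=
        (hb j).eventually (Metric.ball_mem_nhds _ hδ)
      filter_upwards [hev, hB, hlamnn] with k h1 h2 h3
      have hl1 : u k / g j (p k) ≤ B' := le_trans h2 (le_max_left _ _)
      have hl2 : 0 ≤ u k / g j (p k) := h3 j
      rw [Real.dist_eq, abs_lt] at h1
      set lam := u k / g j (p k) with hlam
      set bv := ⟪gradient (g j) (p k), y - p k⟫_ℝ with hbv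
      set δ := ε' / (B' + 1) with hδdef
      have h4 : 0 ≤ lam * (bv - bj + δ) := mul_nonneg hl2 (by linarith [h1.1])
      have h5 : lam * δ ≤ B' * δ := mul_le_mul_of_nonneg_right hl1 hδ.le
      have h6 : B' * δ ≤ ε' := by
        rw [hδdef, mul_comm, div_mul_eq_mul_div, div_le_iff₀ (by linarith : (0:ℝ) < B' + 1)]
        nlinarith
      have h7 : 0 ≤ lam * bj := mul_nonneg hl2 hbjnn
      nlinarith [h4, h5, h6, h7]
    · -- inactive
      have := ((hinact j hj).mul (hb j))
      rw [zero_mul] at this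
      exact (this.eventually (eventually_gt_nhds (by linarith : -ε' < 0))).mono
        fun k hk => le_of_lt hk
  have hall2 : ∀ᶠ k in atTop, ∀ j,
      -ε' ≤ (u k / g j (p k)) * ⟪gradient (g j) (p k), y - p k⟫ :=
    eventually_all.mpr hterm2
  have hfinal : ∀ᶠ k in atTop, f (p k) ≤ f y + ε := by
    filter_upwards [hall2, hpair] with k h1 h2
    have hconv := convex_grad_ineq hf hfconv (p k) y
    have hsum := h2 (y - p k)
    have hlow : -(ε' * m) ≤ ∑ j, (u k / g j (p k)) * ⟪gradient (g j) (p k), y - p k⟫ := by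
      have := Finset.sum_le_sum (fun j (_ : j ∈ Finset.univ) => h1 j)
      have hconst : (∑ _j : Fin m, (-ε')) = -(ε' * m) := by
        rw [Finset.sum_const]; simp [Finset.card_univ]; ring
      linarith [hconst ▸ this]
    have hεm : ε' * m ≤ ε := by
      rw [hε', div_mul_eq_mul_div, div_le_iff₀ (by positivity : (0:ℝ) < m + 1)]
      nlinarith [hε.le]
    have := hconv
    rw [hsum] at this
    linarith
  exact le_of_tendsto hfp hfinal

theorem barrier_path_converges_to_unique_min (n m : ℕ)
    (g : Fin m → EuclideanSpace ℝ (Fin n) → ℝ)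
    (f : EuclideanSpace ℝ (Fin n) → ℝ)
    (hg : ∀ j, ContDiff ℝ 1 (g j)) (hf : ContDiff ℝ 1 f)
    (hfconv : ConvexOn ℝ Set.univ f)
    (K : Set (EuclideanSpace ℝ (Fin n)))
    (hKdef : K = {x | ∀ j, 0 ≤ g j x})
    (hKconv : Convex ℝ K) (hKcomp : IsCompact K)
    (slater : ∃ x₀, ∀ j, 0 < g j x₀)
    (nondeg : ∀ j, ∀ x ∈ K, g j x = 0 → gradient (g j) x ≠ 0)
    (xs : EuclideanSpace ℝ (Fin n)) (hxs : xs ∈ K)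
    (hmin : ∀ y ∈ K, f xs ≤ f y)
    (huniq : ∀ y ∈ K, (∀ z ∈ K, f y ≤ f z) → y = xs)
    (x : ℝ → EuclideanSpace ℝ (Fin n))
    (hfeas : ∀ μ ∈ Set.Ioi (0:ℝ), ∀ j, 0 < g j (x μ))
    (hstat : ∀ μ ∈ Set.Ioi (0:ℝ), gradient f (x μ) =
      ∑ j, (μ / g j (x μ)) • gradient (g j) (x μ)) :
    Tendsto x (nhdsWithin 0 (Set.Ioi 0)) (nhds xs) := by
  obtain ⟨x₀, hx₀⟩ := slater
  by_contra hcon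
  set L := nhdsWithin (0:ℝ) (Set.Ioi 0) with hLdef
  rw [Filter.tendsto_def] at hcon
  push_neg at hcon
  obtain ⟨s, hs, hns⟩ := hcon
  obtain ⟨V, hVs, hVopen, hxsV⟩ := mem_nhds_iff.mp hs
  have hfreq : ∃ᶠ μ in L, x μ ∉ V := by
    by_contra h2
    rw [Filter.not_frequently] at h2
    simp only [not_not] at h2
    exact hns (h2.mono fun μ hμ => hVs hμ)
  set L' := L ⊓ 𝓟 {μ | x μ ∉ V} with hL'def
  haveI hL'ne : L'.NeBot := Filter.frequently_iff_neBot.mp hfreq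
  have hIoi : Set.Ioi (0:ℝ) ∈ L' := mem_inf_of_left self_mem_nhdsWithin
  have hmemK : ∀ᶠ μ in L', x μ ∈ K := by
    filter_upwards [hIoi] with μ hμ
    rw [hKdef]; exact fun j => (hfeas μ hμ j).le
  have hmapK : Filter.map x L' ≤ 𝓟 K := Filter.le_principal_iff.mpr hmemK
  haveI : (Filter.map x L').NeBot := hL'ne.map x
  obtain ⟨xb, hxbK, hclus⟩ := hKcomp.exists_clusterPt hmapK
  have hxbV : xb ∉ V := by
    have h1 : Filter.map x L' ≤ 𝓟 (Vᶜ) := by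
      rw [Filter.le_principal_iff, Filter.mem_map]
      exact mem_inf_of_right (Filter.mem_principal_self _)
    have h2 : ClusterPt xb (𝓟 (Vᶜ)) := hclus.mono h1
    have h3 : xb ∈ closure (Vᶜ) := mem_closure_iff_clusterPt.mpr h2
    rwa [hVopen.isClosed_compl.closure_eq] at h3
  set F := L' ⊓ Filter.comap x (𝓝 xb) with hFdef
  haveI hFne : F.NeBot := by
    have hne : (𝓝 xb ⊓ Filter.map x L').NeBot := hclus
    have h4 : (Filter.map x L' ⊓ 𝓝 xb).NeBot := by rwa [inf_comm] at hne
    have h5 : (Filter.map x F).NeBot := by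
      rw [hFdef, Filter.push_pull]; exact h4
    exact (Filter.map_neBot_iff x).mp h5
  haveI hFcg : F.IsCountablyGenerated := by
    rw [hFdef, hL'def, hLdef, nhdsWithin]
    infer_instance
  obtain ⟨u, hu⟩ := F.exists_seq_tendsto
  have huL : Tendsto u atTop L := hu.mono_right (le_trans inf_le_left inf_le_left)
  have hupos : ∀ᶠ k in atTop, 0 < u k := huL.eventually eventually_mem_nhdsWithin
  have hu0 : Tendsto u atTop (𝓝 0) := huL.mono_right nhdsWithin_le_nhds
  have hxu : Tendsto (fun k => x (u k)) atTop (𝓝 xb) := by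
    have h6 : Tendsto u atTop (Filter.comap x (𝓝 xb)) := hu.mono_right inf_le_right
    exact Filter.tendsto_comap_iff.mp h6
  have hglobalmin := core_cluster_min g f hg hf hfconv K hKdef hKconv x₀ hx₀ nondeg x
    hfeas hstat xb hxbK u hupos hu0 hxu
  have heq := huniq xb hxbK hglobalmin
  exact hxbV (heq ▸ hxsV)
end

section
/- Let K = {x ∈ ℝⁿ : gⱼ(x) ≥ 0, j=1,…,m} be convex and compact with all gⱼ C¹, satisfying Slater's condition and nondegeneracy, f convex C¹, and suppose (x_{μ_ℓ}) are stationary points of φ_{μ_ℓ} with μ_ℓ → 0 converging to x* ∈ K. If J = {j : gⱼ(x*) = 0} is nonempty, then for every j ∈ J the sequence of ratios μ_ℓ / gⱼ(x_{μ_ℓ}) is bounded. -/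
open Real Filter Topology InnerProductSpace

-- derivative nonneg at left endpoint min
lemma aux_deriv_nonneg {h : ℝ → ℝ} {c : ℝ}
    (hd : HasDerivAt h c 0) (h0 : h 0 = 0)
    (hpos : ∀ t ∈ Set.Ioc (0:ℝ) 1, 0 ≤ h t) : 0 ≤ c := by
  have hs : Tendsto (slope h 0) (𝓝[>] 0) (𝓝 c) :=
    (hasDerivAt_iff_tendsto_slope.1 hd).mono_left
      (nhdsWithin_mono _ (fun t ht => ne_of_gt ht))
  refine ge_of_tendsto hs ?_
  filter_upwards [Ioc_mem_nhdsGT (zero_lt_one)] with t ht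
  have := hpos t ht
  rw [slope_def_field]
  have : 0 ≤ h t / t := div_nonneg (hpos t ht) (le_of_lt ht.1)
  simpa [h0] using this

lemma aux_inner_nonneg {E : Type*} [NormedAddCommGroup E] [InnerProductSpace ℝ E] [CompleteSpace E]
    {g : E → ℝ} (hg : ContDiff ℝ 1 g) {K : Set E} (hK : Convex ℝ K)
    (hKg : ∀ y ∈ K, 0 ≤ g y) {xs : E} (hxs : xs ∈ K) (h0 : g xs = 0)
    {y : E} (hy : y ∈ K) : 0 ≤ ⟪gradient g xs, y - xs⟫_ℝ := by
  set v := y - xs with hv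
  have hdiff : DifferentiableAt ℝ g xs := (hg.differentiable one_ne_zero) xs
  have hline : HasDerivAt (fun t : ℝ => xs + t • v) v 0 := by
    simpa using ((hasDerivAt_id (0:ℝ)).smul_const v).const_add xs
  have hF : HasFDerivAt g (fderiv ℝ g xs) (xs + (0:ℝ) • v) := by
    simpa using hdiff.hasFDerivAt
  have hcomp : HasDerivAt (fun t : ℝ => g (xs + t • v)) (fderiv ℝ g xs v) 0 :=
    hF.comp_hasDerivAt 0 hline
  have hgrad : ⟪gradient g xs, v⟫_ℝ = fderiv ℝ g xs v := toDual_symm_apply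
  rw [hgrad]
  refine aux_deriv_nonneg hcomp (by simpa using h0) ?_
  intro t ht
  have hmem : xs + t • v ∈ K := by
    have := hK hxs hy (by linarith [ht.2] : (0:ℝ) ≤ 1 - t) (le_of_lt ht.1) (by ring)
    convert this using 1
    simp [hv, smul_sub]
    module
  exact hKg _ hmem

theorem barrier_multiplier_ratios_bounded (n m : ℕ)
    (g : Fin m → EuclideanSpace ℝ (Fin n) → ℝ)
    (f : EuclideanSpace ℝ (Fin n) → ℝ)
    (hg : ∀ j, ContDiff ℝ 1 (g j)) (hf : ContDiff ℝ 1 f)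
    (hfconv : ConvexOn ℝ Set.univ f)
    (K : Set (EuclideanSpace ℝ (Fin n)))
    (hKdef : K = {x | ∀ j, 0 ≤ g j x})
    (hKconv : Convex ℝ K) (hKcomp : IsCompact K)
    (slater : ∃ x₀, ∀ j, 0 < g j x₀)
    (nondeg : ∀ j, ∀ x ∈ K, g j x = 0 → gradient (g j) x ≠ 0)
    (μ : ℕ → ℝ) (hμpos : ∀ ℓ, 0 < μ ℓ)
    (hμ0 : Tendsto μ atTop (nhds 0))
    (x : ℕ → EuclideanSpace ℝ (Fin n))
    (hfeas : ∀ ℓ j, 0 < g j (x ℓ))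
    (hstat : ∀ ℓ, gradient f (x ℓ) =
      ∑ j, (μ ℓ / g j (x ℓ)) • gradient (g j) (x ℓ))
    (xs : EuclideanSpace ℝ (Fin n)) (hxs : xs ∈ K)
    (hlim : Tendsto x atTop (nhds xs))
    (hJ : ∃ j, g j xs = 0) :
    ∀ j, g j xs = 0 → ∃ C : ℝ, ∀ ℓ, μ ℓ / g j (x ℓ) ≤ C := by
  obtain ⟨x₀, hx₀⟩ := slater
  set d := x₀ - xs with hddef
  have hKg : ∀ k, ∀ y ∈ K, 0 ≤ g k y := by
    intro k y hy; rw [hKdef] at hy; exact hy k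
  -- a ball around the Slater point inside K
  have hopen : IsOpen {y : EuclideanSpace ℝ (Fin n) | ∀ k, 0 < g k y} := by
    have he : {y : EuclideanSpace ℝ (Fin n) | ∀ k, 0 < g k y}
        = ⋂ k, (g k) ⁻¹' Set.Ioi 0 := by ext y; simp
    rw [he]
    exact isOpen_iInter_of_finite fun k => isOpen_Ioi.preimage (hg k).continuous
  obtain ⟨r, hr, hball⟩ := Metric.isOpen_iff.1 hopen x₀ hx₀
  have hballK : Metric.ball x₀ r ⊆ K := fun y hy => by
    rw [hKdef]; exact fun k => (hball hy k).le
  have hx₀K : x₀ ∈ K := hballK (Metric.mem_ball_self hr)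
  -- strict positivity of ⟪∇g_k(x*), d⟫ for active k
  have hstrict : ∀ k, g k xs = 0 → 0 < ⟪gradient (g k) xs, d⟫_ℝ := by
    intro k hk
    have hG : gradient (g k) xs ≠ 0 := nondeg k xs hxs hk
    set G := gradient (g k) xs with hGdef
    have hGn : (0:ℝ) < ‖G‖ := norm_pos_iff.2 hG
    set y := x₀ - (r/2) • (‖G‖⁻¹ • G) with hy
    have hyK : y ∈ K := by
      apply hballK
      rw [Metric.mem_ball, dist_eq_norm]
      have h1 : y - x₀ = -((r/2) • (‖G‖⁻¹ • G)) := by rw [hy]; abel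
      rw [h1, norm_neg, norm_smul, norm_smul, norm_inv, norm_norm]
      rw [inv_mul_cancel₀ (ne_of_gt hGn)]
      simp [abs_of_pos, hr]

    have hnn : 0 ≤ ⟪G, y - xs⟫_ℝ :=
      aux_inner_nonneg (hg k) hKconv (hKg k) hxs hk hyK
    have hexp : ⟪G, y - xs⟫_ℝ = ⟪G, d⟫_ℝ - (r/2) * ‖G‖ := by
      have h2 : y - xs = d - (r/2) • (‖G‖⁻¹ • G) := by rw [hy, hddef]; abel
      rw [h2, inner_sub_right, real_inner_smul_right, real_inner_smul_right,
        real_inner_self_eq_norm_mul_norm]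
      field_simp
    nlinarith [hnn, hexp, mul_pos (half_pos hr) hGn]
  -- rewrite gradients as fderiv applications for continuity
  have hgi : ∀ (h : EuclideanSpace ℝ (Fin n) → ℝ) (y v : EuclideanSpace ℝ (Fin n)),
      ⟪gradient h y, v⟫_ℝ = fderiv ℝ h y v := fun h y v => toDual_symm_apply
  have hφ : ∀ (h : EuclideanSpace ℝ (Fin n) → ℝ), ContDiff ℝ 1 h →
      Tendsto (fun ℓ => ⟪gradient h (x ℓ), d⟫_ℝ) atTop (𝓝 ⟪gradient h xs, d⟫_ℝ) := by
    intro h hh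
    have hc : Continuous fun y => fderiv ℝ h y d :=
      (hh.continuous_fderiv one_ne_zero).clm_apply continuous_const
    simp only [hgi]
    exact (hc.tendsto xs).comp hlim
  have hlam0 : ∀ k, g k xs ≠ 0 → Tendsto (fun ℓ => μ ℓ / g k (x ℓ)) atTop (𝓝 0) := by
    intro k hk
    have := hμ0.div (((hg k).continuous.tendsto xs).comp hlim) hk
    rw [zero_div] at this; exact this
  have key : ∀ ℓ, ⟪gradient f (x ℓ), d⟫_ℝ
      = ∑ k, (μ ℓ / g k (x ℓ)) * ⟪gradient (g k) (x ℓ), d⟫_ℝ := by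
    intro ℓ
    rw [hstat ℓ, sum_inner]
    simp only [real_inner_smul_left]
  obtain ⟨A, hA⟩ := (hφ f hf).bddAbove_range
  intro j hj
  have hc : 0 < ⟪gradient (g j) xs, d⟫_ℝ := hstrict j hj
  set c := ⟪gradient (g j) xs, d⟫_ℝ with hcdef
  have E1 : ∀ᶠ ℓ in atTop, c/2 ≤ ⟪gradient (g j) (x ℓ), d⟫_ℝ :=
    (hφ (g j) (hg j)).eventually (eventually_ge_nhds (by linarith))
  have E2 : ∀ᶠ ℓ in atTop, ∀ k,
      -1 ≤ (μ ℓ / g k (x ℓ)) * ⟪gradient (g k) (x ℓ), d⟫_ℝ := by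
    rw [eventually_all]
    intro k
    by_cases hk : g k xs = 0
    · filter_upwards [(hφ (g k) (hg k)).eventually (eventually_gt_nhds (hstrict k hk))]
        with ℓ hℓ
      have h0 : 0 ≤ (μ ℓ / g k (x ℓ)) * ⟪gradient (g k) (x ℓ), d⟫_ℝ :=
        mul_nonneg (div_pos (hμpos ℓ) (hfeas ℓ k)).le hℓ.le
      linarith
    · have h0 : Tendsto (fun ℓ => (μ ℓ / g k (x ℓ)) * ⟪gradient (g k) (x ℓ), d⟫_ℝ)
          atTop (𝓝 0) := by
        simpa using (hlam0 k hk).mul (hφ (g k) (hg k))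
      exact h0.eventually (eventually_ge_nhds (by norm_num))
  obtain ⟨N, hN⟩ := eventually_atTop.1 (E1.and E2)
  have hbound : ∀ ℓ, N ≤ ℓ → μ ℓ / g j (x ℓ) ≤ (A + m) / (c/2) := by
    intro ℓ hℓ
    obtain ⟨h1, h2⟩ := hN ℓ hℓ
    have hlampos : 0 ≤ μ ℓ / g j (x ℓ) := (div_pos (hμpos ℓ) (hfeas ℓ j)).le
    have htj : (μ ℓ / g j (x ℓ)) * (c/2)
        ≤ (μ ℓ / g j (x ℓ)) * ⟪gradient (g j) (x ℓ), d⟫_ℝ :=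
      mul_le_mul_of_nonneg_left h1 hlampos
    have hrest : -(m:ℝ) ≤ ∑ k ∈ Finset.univ.erase j,
        (μ ℓ / g k (x ℓ)) * ⟪gradient (g k) (x ℓ), d⟫_ℝ := by
      have hs := Finset.card_nsmul_le_sum (Finset.univ.erase j)
        (fun k => (μ ℓ / g k (x ℓ)) * ⟪gradient (g k) (x ℓ), d⟫_ℝ) (-1 : ℝ)
        (fun k _ => h2 k)
      have hcard : ((Finset.univ.erase j).card : ℝ) ≤ m := by
        have := Finset.card_erase_le (a := j) (s := (Finset.univ : Finset (Fin m)))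
        have hm : (Finset.univ : Finset (Fin m)).card = m := Finset.card_univ.trans (Fintype.card_fin m)
        exact_mod_cast le_trans this (le_of_eq hm)
      have : ((Finset.univ.erase j).card : ℝ) • (-1:ℝ)
          = -((Finset.univ.erase j).card : ℝ) := by simp
      rw [nsmul_eq_mul] at hs
      linarith
    have hsplit : (μ ℓ / g j (x ℓ)) * ⟪gradient (g j) (x ℓ), d⟫_ℝ
        + ∑ k ∈ Finset.univ.erase j, (μ ℓ / g k (x ℓ)) * ⟪gradient (g k) (x ℓ), d⟫_ℝ
        = ∑ k, (μ ℓ / g k (x ℓ)) * ⟪gradient (g k) (x ℓ), d⟫_ℝ :=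
      Finset.add_sum_erase _ (fun k => (μ ℓ / g k (x ℓ)) * ⟪gradient (g k) (x ℓ), d⟫_ℝ) (Finset.mem_univ j)
    have hup : ∑ k, (μ ℓ / g k (x ℓ)) * ⟪gradient (g k) (x ℓ), d⟫_ℝ ≤ A := by
      rw [← key ℓ]; exact hA (Set.mem_range_self ℓ)
    have hfin : (μ ℓ / g j (x ℓ)) * (c/2) ≤ A + m := by linarith
    rwa [← le_div_iff₀ (by linarith : (0:ℝ) < c/2)] at hfin
  refine ⟨max ((A + m) / (c/2))
    ((Finset.range (N+1)).sup' Finset.nonempty_range_add_one (fun ℓ => μ ℓ / g j (x ℓ))), ?_⟩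
  intro ℓ
  rcases le_or_gt ℓ N with h | h
  · exact le_trans (Finset.le_sup' (fun ℓ => μ ℓ / g j (x ℓ)) (Finset.mem_range.2 (Nat.lt_succ_of_le h)))
      (le_max_right _ _)
  · exact le_trans (hbound ℓ h.le) (le_max_left _ _)
end
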